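/- arXiv:1805.04738 — 2 statements merged into one kernel-verified Lean document; each statement's English description precedes it below -/
import Mathlib

section
/- Consider the equation u + (1/2)|Du|² = 0 on the circle 𝕋 = ℝ/ℤ. Let u₁ be the 1-periodic even extension of the function x ↦ −x²/2 defined on [0, 1/2]. Then u₁ satisfies the following: (a) u₁ is Lipschitz; (b) at every point x where u₁ is differentiable, u₁(x) + (1/2)|u₁'(x)|² = 0; (c) the constant function u₂ ≡ 0 also satisfies u₂(x) + (1/2)|u₂'(x)|² = 0 everywhere. -/
open Set

private lemma round_min (x : ℝ) (m : ℤ) : |x - round x| ≤ |x - m| := by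
  rcases le_or_gt (1/2 : ℝ) (|x - m|) with h | h
  · exact (abs_sub_round x).trans h
  · have h1 := abs_lt.1 h
    have hm : round x = m := by
      rw [round_eq]
      refine Int.floor_eq_iff.2 ⟨by linarith, by linarith⟩
    rw [hm]

/-- The even 1-periodic extension `u₁` of `x ↦ -x²/2` on `[0,1/2]` is Lipschitz and solves
`u + |u'|²/2 = 0` at every point of differentiability; the zero function also solves it. -/
theorem stmt_3 (u₁ : ℝ → ℝ)
    (hper : ∀ x : ℝ, u₁ (x + 1) = u₁ x)
    (heven : ∀ x : ℝ, u₁ (-x) = u₁ x)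
    (hval : ∀ x ∈ Icc (0:ℝ) (1/2), u₁ x = -x ^ 2 / 2) :
    (∃ C : NNReal, LipschitzWith C u₁) ∧
    (∀ x p : ℝ, HasDerivAt u₁ p x → u₁ x + (1/2) * p ^ 2 = 0) ∧
    (∀ x : ℝ, (fun _ : ℝ => (0:ℝ)) x
        + (1/2) * (deriv (fun _ : ℝ => (0:ℝ)) x) ^ 2 = 0) := by
  -- periodicity for all integers
  have hperZ : ∀ (x : ℝ) (n : ℤ), u₁ (x + n) = u₁ x := by
    intro x n
    induction n using Int.induction_on with
    | zero => simp
    | succ k ih =>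
        push_cast
        rw [show x + ((k:ℝ) + 1) = (x + k) + 1 by ring, hper]
        push_cast at ih; exact ih
    | pred k ih =>
        push_cast
        have h2 := hper (x + (-(k:ℝ) - 1))
        push_cast at ih
        rw [show x + (-(k:ℝ) - 1) + 1 = x + -(k:ℝ) by ring] at h2
        rw [show x + (-(k:ℝ) - 1) = x + (-(k:ℝ) - 1) by ring, ← h2, ih]
  -- key formula
  have key : ∀ (z : ℝ) (c : ℤ), |z - c| ≤ 1/2 → u₁ z = -(z - c) ^ 2 / 2 := by
    intro z c hzc
    have h1 : u₁ z = u₁ (z - c) := by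
      have := hperZ (z - c) c; rw [sub_add_cancel] at this; exact this
    rcases le_or_gt 0 (z - c) with h | h
    · rw [h1, hval (z - c) ⟨h, (abs_le.1 hzc).2⟩]
    · have h2 : u₁ (z - c) = u₁ (-(z - c)) := (heven (z - c)).symm
      rw [h1, h2, hval (-(z - c)) ⟨by linarith, by have := (abs_le.1 hzc).1; linarith⟩]
      ring
  have uform : ∀ z : ℝ, u₁ z = -(z - round z) ^ 2 / 2 := fun z =>
    key z (round z) (abs_sub_round z)
  refine ⟨⟨1, ?_⟩, ?_, ?_⟩
  · -- Lipschitz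
    apply LipschitzWith.of_dist_le_mul
    intro x y
    rw [Real.dist_eq, Real.dist_eq, uform x, uform y]
    set A := |x - (round x : ℝ)| with hA
    set B := |y - (round y : ℝ)| with hB
    have h2 : A ≤ |x - y| + B := by
      calc A ≤ |x - (round y : ℝ)| := round_min x (round y)
        _ = |(x - y) + (y - round y)| := by ring_nf
        _ ≤ |x - y| + B := abs_add_le _ _
    have h3 : B ≤ |x - y| + A := by
      calc B ≤ |y - (round x : ℝ)| := round_min y (round x)
        _ = |(y - x) + (x - round x)| := by ring_nf
        _ ≤ |y - x| + A := abs_add_le _ _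
        _ = |x - y| + A := by rw [abs_sub_comm]
    have haa : A ≤ 1/2 := abs_sub_round x
    have hbb : B ≤ 1/2 := abs_sub_round y
    have hA0 : 0 ≤ A := abs_nonneg _
    have hB0 : 0 ≤ B := abs_nonneg _
    have hsq : -(x - round x) ^ 2 / 2 - -(y - round y) ^ 2 / 2
        = (B - A) * (A + B) / 2 := by
      have e1 : A ^ 2 = (x - round x) ^ 2 := sq_abs _
      have e2 : B ^ 2 = (y - round y) ^ 2 := sq_abs _
      have : (B - A) * (A + B) / 2 = B ^ 2 / 2 - A ^ 2 / 2 := by ring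
      rw [this, e1, e2]; ring
    rw [hsq, abs_div, abs_mul]
    have hd : |B - A| ≤ |x - y| := by
      rw [abs_sub_le_iff]; constructor <;> linarith
    have hs : |A + B| ≤ 1 := by rw [abs_of_nonneg (by linarith)]; linarith
    have := mul_le_mul hd hs (abs_nonneg _) (abs_nonneg _)
    push_cast
    rw [abs_of_nonneg (by norm_num : (0:ℝ) ≤ 2)]
    nlinarith [abs_nonneg (x - y)]
  · -- the PDE
    intro x p hd
    rcases lt_or_eq_of_le (abs_sub_round x) with h | h
    · -- interior point
      have hx : |x - (round x : ℝ)| < 1/2 := h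
      have heq : u₁ =ᶠ[nhds x] fun z => -(z - (round x : ℝ)) ^ 2 / 2 := by
        have hb : Metric.ball x (1/2 - |x - (round x : ℝ)|) ∈ nhds x :=
          Metric.ball_mem_nhds x (by linarith)
        filter_upwards [hb] with z hz
        have hzx : |z - x| < 1/2 - |x - (round x : ℝ)| := by
          rwa [← Real.dist_eq, Metric.mem_ball] at hz
        exact key z (round x) (by
          calc |z - ((round x : ℤ) : ℝ)| = |(z - x) + (x - round x)| := by ring_nf
            _ ≤ |z - x| + |x - (round x : ℝ)| := abs_add_le _ _
            _ ≤ 1/2 := by linarith)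
      have hg : HasDerivAt (fun z : ℝ => -(z - (round x : ℝ)) ^ 2 / 2)
          (-(x - round x)) x := by
        have h1 : HasDerivAt (fun z : ℝ => z - (round x : ℝ)) 1 x :=
          (hasDerivAt_id x).sub_const _
        have h2 := (h1.pow 2).neg.div_const 2
        exact h2.congr_deriv (by push_cast; ring)
      have hp : p = -(x - round x) := hd.unique (hg.congr_of_eventuallyEq heq)
      rw [uform x, hp]
      ring
    · -- corner point: contradiction
      exfalso
      have h' : |x - (round x : ℝ)| = 1/2 := h.symm ▸ h
      obtain ⟨m, hm⟩ : ∃ m : ℤ, x = (m : ℝ) + 1/2 := by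
        rcases (abs_eq (by norm_num : (0:ℝ) ≤ 1/2)).1 h with h1 | h1
        · exact ⟨round x, by linarith⟩
        · exact ⟨round x - 1, by push_cast; linarith⟩
      have hleft : ∀ z ∈ Icc (x - 1/2) x, u₁ z = -(z - (m:ℝ)) ^ 2 / 2 := by
        intro z hz
        have h1 := hz.1; have h2 := hz.2
        exact key z m (abs_le.2 ⟨by linarith, by linarith⟩)
      have hright : ∀ z ∈ Icc x (x + 1/2), u₁ z = -(z - ((m:ℝ) + 1)) ^ 2 / 2 := by
        intro z hz
        have h1 := hz.1; have h2 := hz.2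
        have := key z (m + 1) (by
          rw [abs_le]; push_cast
          constructor <;> linarith)
        rw [this]; push_cast; ring
      have hgl : HasDerivWithinAt (fun z : ℝ => -(z - (m:ℝ)) ^ 2 / 2)
          (-(x - (m:ℝ))) (Iic x) x := by
        have h1 : HasDerivAt (fun z : ℝ => z - (m:ℝ)) 1 x := (hasDerivAt_id x).sub_const _
        have h2 := (h1.pow 2).neg.div_const 2
        have h3 : HasDerivAt (fun z : ℝ => -(z - (m:ℝ)) ^ 2 / 2) (-(x - (m:ℝ))) x := by
          exact h2.congr_deriv (by push_cast; ring)
        exact h3.hasDerivWithinAt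
      have hgr : HasDerivWithinAt (fun z : ℝ => -(z - ((m:ℝ) + 1)) ^ 2 / 2)
          (-(x - ((m:ℝ) + 1))) (Ici x) x := by
        have h1 : HasDerivAt (fun z : ℝ => z - ((m:ℝ) + 1)) 1 x :=
          (hasDerivAt_id x).sub_const _
        have h2 := (h1.pow 2).neg.div_const 2
        have h3 : HasDerivAt (fun z : ℝ => -(z - ((m:ℝ) + 1)) ^ 2 / 2)
            (-(x - ((m:ℝ) + 1))) x := by
          exact h2.congr_deriv (by push_cast; ring)
        exact h3.hasDerivWithinAt
      have hmemL : {z : ℝ | u₁ z = -(z - (m:ℝ)) ^ 2 / 2} ∈ nhdsWithin x (Iic x) := by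
        rw [mem_nhdsWithin]
        exact ⟨Ioi (x - 1/2), isOpen_Ioi, by simp only [mem_Ioi]; linarith,
          fun z hz => hleft z ⟨le_of_lt hz.1, hz.2⟩⟩
      have hmemR : {z : ℝ | u₁ z = -(z - ((m:ℝ) + 1)) ^ 2 / 2} ∈ nhdsWithin x (Ici x) := by
        rw [mem_nhdsWithin]
        exact ⟨Iio (x + 1/2), isOpen_Iio, by simp only [mem_Iio]; linarith,
          fun z hz => hright z ⟨hz.2, le_of_lt hz.1⟩⟩
      have hul : HasDerivWithinAt u₁ (-(x - (m:ℝ))) (Iic x) x :=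
        hgl.congr_of_eventuallyEq (Filter.eventuallyEq_of_mem hmemL fun z hz => hz)
          (hleft x ⟨by linarith, le_refl x⟩)
      have hur : HasDerivWithinAt u₁ (-(x - ((m:ℝ) + 1))) (Ici x) x :=
        hgr.congr_of_eventuallyEq (Filter.eventuallyEq_of_mem hmemR fun z hz => hz)
          (hright x ⟨le_refl x, by linarith⟩)
      have hpl : p = -(x - (m:ℝ)) := by
        have h1 := (hd.hasDerivWithinAt (s := Iic x)).derivWithin
          (uniqueDiffOn_Iic x x self_mem_Iic)
        have h2 := hul.derivWithin (uniqueDiffOn_Iic x x self_mem_Iic)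
        rw [← h1, h2]
      have hpr : p = -(x - ((m:ℝ) + 1)) := by
        have h1 := (hd.hasDerivWithinAt (s := Ici x)).derivWithin
          (uniqueDiffOn_Ici x x self_mem_Ici)
        have h2 := hur.derivWithin (uniqueDiffOn_Ici x x self_mem_Ici)
        rw [← h1, h2]
      rw [hpl] at hpr
      linarith
  · intro x
    simp
end

section
/- Let h_{·,·}(·,·) and h^{·,·}(·,·) be two functions M × ℝ × M × (0,∞) → ℝ related by the duality: h_{x₀,u₀}(x,t) = u if and only if h^{x,u}(x₀,t) = u₀, for all x₀, x ∈ M, u₀, u ∈ ℝ, t > 0. Assume both are strictly increasing in their second argument (the value u₀, resp. u). Define, for φ : M → ℝ, T⁻_t φ(x) := inf_{y ∈ M} h_{y,φ(y)}(x,t) and T⁺_t φ(x) := sup_{y ∈ M} h^{y,φ(y)}(x,t). Suppose v : M → ℝ satisfies T⁺_t v = v for all t > 0. Then T⁻_t v ≥ v pointwise for all t > 0. -/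
/-- If `v` is a fixed point of the forward semigroup `T⁺_t v(x) = sup_y h^{y,v(y)}(x,t)`
(expressed via `IsLUB`), then `T⁻_t v ≥ v` pointwise, i.e. `v x ≤ h_{y,v(y)}(x,t)` for all `y`.
Here `h` is the forward and `H` the backward implicit action function, related by duality. -/
theorem stmt_6 {M : Type*} (h H : M → ℝ → M → ℝ → ℝ)
    (hdual : ∀ (x₀ : M) (u₀ : ℝ) (x : M) (u : ℝ) (t : ℝ), 0 < t →
      (h x₀ u₀ x t = u ↔ H x u x₀ t = u₀))
    (hmono : ∀ (x₀ : M) (u₁ u₂ : ℝ) (x : M) (t : ℝ), 0 < t → u₁ < u₂ →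
      h x₀ u₁ x t < h x₀ u₂ x t)
    (Hmono : ∀ (x₀ : M) (u₁ u₂ : ℝ) (x : M) (t : ℝ), 0 < t → u₁ < u₂ →
      H x₀ u₁ x t < H x₀ u₂ x t)
    (v : M → ℝ)
    (hfix : ∀ t : ℝ, 0 < t → ∀ x : M,
      IsLUB (Set.range fun y => H y (v y) x t) (v x)) :
    ∀ t : ℝ, 0 < t → ∀ x y : M, v x ≤ h y (v y) x t := by
  intro t ht x y
  set u := h y (v y) x t with hu
  have hHu : H x u y t = v y := (hdual y (v y) x u t ht).mp rfl
  have hlub := hfix t ht y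
  have hle : H x (v x) y t ≤ v y := hlub.1 (Set.mem_range_self x)
  by_contra hlt
  push_neg at hlt
  have := Hmono x u (v x) y t ht hlt
  rw [hHu] at this
  exact (this.trans_le hle).false
end
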